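/- Adjoint-based Hessian action formula, finite-dimensional form. Let r : ℝ^n × ℝ^d → ℝ^n and q : ℝ^n × ℝ^d → ℝ be twice continuously differentiable, and let u : ℝ^d → ℝ^n be twice differentiable at m̄ ∈ ℝ^d with r(u(m), m) = 0 for all m in a neighborhood of m̄. Write A = D_u r(u(m̄), m̄), B = D_m r(u(m̄), m̄), assume A is invertible, and let v ∈ ℝ^n solve the adjoint equation Aᵀ v = −∇_u q(u(m̄), m̄). Define the Lagrangian ℒ(u, m) = q(u, m) + ⟨v, r(u, m)⟩ with this fixed v. Given a direction m̂ ∈ ℝ^d, let the incremental state û ∈ ℝ^n solve A û = −B m̂, and let the incremental adjoint v̂ ∈ ℝ^n solve Aᵀ v̂ = −(∂²_{uu} ℒ(u(m̄), m̄) û + ∂²_{um} ℒ(u(m̄), m̄) m̂). Then the Hessian of the reduced function Q(m) = q(u(m), m) at m̄ acting on m̂ is ∇²Q(m̄) m̂ = Bᵀ v̂ + ∂²_{mu} ℒ(u(m̄), m̄) û + ∂²_{mm} ℒ(u(m̄), m̄) m̂. -/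

import Mathlib

open Matrix Filter

section Aux

variable {E F G : Type*} [NormedAddCommGroup E] [NormedSpace ℝ E]
  [NormedAddCommGroup F] [NormedSpace ℝ F] [NormedAddCommGroup G] [NormedSpace ℝ G]

lemma aux_partial_fst {f : E × F → G} {x : E} {c : F} (hf : DifferentiableAt ℝ f (x, c))
    (z : E) : fderiv ℝ (fun y => f (y, c)) x z = fderiv ℝ f (x, c) (z, 0) := by
  have h : fderiv ℝ (fun y => f (y, c)) x
      = (fderiv ℝ f (x, c)).comp (ContinuousLinearMap.inl ℝ E F) :=
    (hf.hasFDerivAt.comp x (hasFDerivAt_prodMk_left x c)).fderiv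
  rw [h]; simp

lemma aux_partial_snd {f : E × F → G} {x : E} {c : F} (hf : DifferentiableAt ℝ f (x, c))
    (z : F) : fderiv ℝ (fun y => f (x, y)) c z = fderiv ℝ f (x, c) (0, z) := by
  have h : fderiv ℝ (fun y => f (x, y)) c
      = (fderiv ℝ f (x, c)).comp (ContinuousLinearMap.inr ℝ E F) :=
    (hf.hasFDerivAt.comp c (hasFDerivAt_prodMk_right x c)).fderiv
  rw [h]; simp

lemma aux_fderiv_fderiv_apply {f : E → F} (hf : ContDiff ℝ 2 f)
    {p : G → E} {p' : G →L[ℝ] E} {x : G} (hp : HasFDerivAt p p' x) (k : E) (w : G) :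
    fderiv ℝ (fun y => fderiv ℝ f (p y) k) x w
      = fderiv ℝ (fderiv ℝ f) (p x) (p' w) k := by
  have h1 : ContDiff ℝ 1 (fderiv ℝ f) := hf.fderiv_right (by norm_num)
  have hc : HasFDerivAt (fun y => fderiv ℝ f (p y))
      ((fderiv ℝ (fderiv ℝ f) (p x)).comp p') x :=
    ((h1.differentiable (by norm_num) (p x)).hasFDerivAt).comp x hp
  have h : fderiv ℝ (fun y => fderiv ℝ f (p y) k) x
      = (fderiv ℝ f (p x)).comp (0 : G →L[ℝ] E)
        + ((fderiv ℝ (fderiv ℝ f) (p x)).comp p').flip k :=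
    (hc.clm_apply (hasFDerivAt_const k x)).fderiv
  rw [h]; simp

end Aux

noncomputable def auxDot {n : ℕ} (v : Fin n → ℝ) : (Fin n → ℝ) →L[ℝ] ℝ :=
  ∑ i, v i • ContinuousLinearMap.proj i

lemma auxDot_apply {n : ℕ} (v x : Fin n → ℝ) : auxDot v x = v ⬝ᵥ x := by
  simp [auxDot, dotProduct, ContinuousLinearMap.sum_apply]

def uncur {α β γ : Type*} (f : α → β → γ) : α × β → γ := fun p => f p.1 p.2


/-- Adjoint-based Hessian action formula (finite-dimensional form). Let
`r : ℝⁿ × ℝ^d → ℝⁿ` and `q : ℝⁿ × ℝ^d → ℝ` be `C²`, and let `u : ℝ^d → ℝⁿ` be twice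
differentiable at `m̄` with `r(u(m), m) = 0` near `m̄`. With `A = D_u r(u(m̄), m̄)`
invertible, `B = D_m r(u(m̄), m̄)`, adjoint `v` solving `Aᵀ v = -∇_u q(u(m̄), m̄)`,
Lagrangian `ℒ(x, m) = q(x, m) + ⟨v, r(x, m)⟩` (with this fixed `v`), incremental
state `û` solving `A û = -B m̂`, and incremental adjoint `v̂` solving
`Aᵀ v̂ = -(∂²ᵤᵤℒ û + ∂²ᵤₘℒ m̂)`, the Hessian of the reduced function
`Q(m) = q(u(m), m)` at `m̄` acting on `m̂` is
`∇²Q(m̄) m̂ = Bᵀ v̂ + ∂²ₘᵤℒ û + ∂²ₘₘℒ m̂`. -/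
theorem adjoint_hessian_action_formula {n d : ℕ}
    (r : (Fin n → ℝ) → (Fin d → ℝ) → (Fin n → ℝ))
    (q : (Fin n → ℝ) → (Fin d → ℝ) → ℝ)
    (hr : ContDiff ℝ 2 (fun p : (Fin n → ℝ) × (Fin d → ℝ) => r p.1 p.2))
    (hq : ContDiff ℝ 2 (fun p : (Fin n → ℝ) × (Fin d → ℝ) => q p.1 p.2))
    (u : (Fin d → ℝ) → (Fin n → ℝ)) (mbar : Fin d → ℝ)
    (hu1 : ∀ᶠ m in nhds mbar, DifferentiableAt ℝ u m)
    (hu2 : DifferentiableAt ℝ (fderiv ℝ u) mbar)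
    (hstate : ∀ᶠ m in nhds mbar, r (u m) m = 0)
    (A : Matrix (Fin n) (Fin n) ℝ)
    (hA : ∀ w : Fin n → ℝ, A *ᵥ w = fderiv ℝ (fun x => r x mbar) (u mbar) w)
    (hAinv : IsUnit A.det)
    (B : Matrix (Fin n) (Fin d) ℝ)
    (hB : ∀ w : Fin d → ℝ, B *ᵥ w = fderiv ℝ (fun m => r (u mbar) m) mbar w)
    (gu : Fin n → ℝ)
    (hgu : ∀ w : Fin n → ℝ, gu ⬝ᵥ w = fderiv ℝ (fun x => q x mbar) (u mbar) w)
    (v : Fin n → ℝ) (hv : Aᵀ *ᵥ v = -gu)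
    (L : (Fin n → ℝ) → (Fin d → ℝ) → ℝ)
    (hL : ∀ x m, L x m = q x m + v ⬝ᵥ r x m)
    (Luu : Matrix (Fin n) (Fin n) ℝ)
    (hLuu : ∀ w what : Fin n → ℝ,
      w ⬝ᵥ (Luu *ᵥ what) =
        fderiv ℝ (fun x => fderiv ℝ (fun y => L y mbar) x what) (u mbar) w)
    (Lum : Matrix (Fin n) (Fin d) ℝ)
    (hLum : ∀ (w : Fin n → ℝ) (mh : Fin d → ℝ),
      w ⬝ᵥ (Lum *ᵥ mh) =
        fderiv ℝ (fun m => fderiv ℝ (fun x => L x m) (u mbar) w) mbar mh)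
    (Lmu : Matrix (Fin d) (Fin n) ℝ)
    (hLmu : ∀ (w : Fin d → ℝ) (xh : Fin n → ℝ),
      w ⬝ᵥ (Lmu *ᵥ xh) =
        fderiv ℝ (fun x => fderiv ℝ (fun m => L x m) mbar w) (u mbar) xh)
    (Lmm : Matrix (Fin d) (Fin d) ℝ)
    (hLmm : ∀ w mh : Fin d → ℝ,
      w ⬝ᵥ (Lmm *ᵥ mh) =
        fderiv ℝ (fun m => fderiv ℝ (fun m' => L (u mbar) m') m mh) mbar w)
    (mhat : Fin d → ℝ)
    (uhat : Fin n → ℝ) (huhat : A *ᵥ uhat = -(B *ᵥ mhat))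
    (vhat : Fin n → ℝ) (hvhat : Aᵀ *ᵥ vhat = -(Luu *ᵥ uhat + Lum *ᵥ mhat)) :
    ∀ w : Fin d → ℝ,
      fderiv ℝ (fun m => fderiv ℝ (fun m' => q (u m') m') m mhat) mbar w =
        (Bᵀ *ᵥ vhat + Lmu *ᵥ uhat + Lmm *ᵥ mhat) ⬝ᵥ w := by

  intro w
  -- curried versions
  have hr' : ContDiff ℝ 2 (uncur r) := hr
  have hq' : ContDiff ℝ 2 (uncur q) := hq
  have hdot : ContDiff ℝ 2 (fun p : (Fin n → ℝ) × (Fin d → ℝ) => v ⬝ᵥ r p.1 p.2) := by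
    have h : (fun p : (Fin n → ℝ) × (Fin d → ℝ) => v ⬝ᵥ r p.1 p.2)
        = fun p => auxDot v (uncur r p) := by
      funext p; rw [auxDot_apply]; rfl
    rw [h]
    exact (auxDot v).contDiff.comp hr'
  have hL2 : ContDiff ℝ 2 (uncur L) := by
    have h : uncur L = fun p : (Fin n → ℝ) × (Fin d → ℝ) => q p.1 p.2 + v ⬝ᵥ r p.1 p.2 := by
      funext p; exact hL p.1 p.2
    rw [h]
    exact hq.add hdot
  have hLd : Differentiable ℝ (uncur L) := hL2.differentiable (by norm_num)
  have hud : DifferentiableAt ℝ u mbar := hu1.self_of_nhds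
  have hg : HasFDerivAt (fun m => (u m, m))
      ((fderiv ℝ u mbar).prod (ContinuousLinearMap.id ℝ (Fin d → ℝ))) mbar :=
    hud.hasFDerivAt.prodMk (hasFDerivAt_id mbar)
  -- constraint differentiation
  have hconstr : ∀ z : Fin d → ℝ, A *ᵥ (fderiv ℝ u mbar z) + B *ᵥ z = 0 := by
    intro z
    have hcomp : HasFDerivAt (fun m => r (u m) m)
        ((fderiv ℝ (uncur r) (u mbar, mbar)).comp
          ((fderiv ℝ u mbar).prod (ContinuousLinearMap.id ℝ (Fin d → ℝ)))) mbar :=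
      HasFDerivAt.comp (f := fun m => (u m, m)) mbar
        (hr'.differentiable (by norm_num) (u mbar, mbar)).hasFDerivAt hg
    have h0 : fderiv ℝ (fun m => r (u m) m) mbar = 0 := by
      have he : (fun m => r (u m) m) =ᶠ[nhds mbar] (fun _ => (0 : Fin n → ℝ)) := hstate
      rw [he.fderiv_eq]
      simp
    have h1 := hcomp.fderiv
    rw [h0] at h1
    have h2 := congrArg (fun T : (Fin d → ℝ) →L[ℝ] (Fin n → ℝ) => T z) h1
    simp only [ContinuousLinearMap.zero_apply, ContinuousLinearMap.comp_apply,
      ContinuousLinearMap.prod_apply, ContinuousLinearMap.coe_id', id_eq] at h2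
    have e1 : fderiv ℝ (uncur r) (u mbar, mbar) ((fderiv ℝ u mbar) z, 0)
        = A *ᵥ ((fderiv ℝ u mbar) z) := by
      rw [hA]
      exact (aux_partial_fst (hr'.differentiable (by norm_num) (u mbar, mbar))
        ((fderiv ℝ u mbar) z)).symm
    have e2 : fderiv ℝ (uncur r) (u mbar, mbar) (0, z) = B *ᵥ z := by
      rw [hB]
      exact (aux_partial_snd (hr'.differentiable (by norm_num) (u mbar, mbar)) z).symm
    have hsplit : ((fderiv ℝ u mbar) z, z)
        = (((fderiv ℝ u mbar) z, 0) : (Fin n → ℝ) × (Fin d → ℝ)) + (0, z) := by simp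
    rw [hsplit, map_add, e1, e2] at h2
    exact h2.symm
  -- invertibility
  have hAinj : ∀ x y : Fin n → ℝ, A *ᵥ x = A *ᵥ y → x = y := by
    intro x y h
    have h' := congrArg (fun t => A⁻¹ *ᵥ t) h
    simpa [Matrix.mulVec_mulVec, Matrix.nonsing_inv_mul A hAinv] using h'
  have huderiv : fderiv ℝ u mbar mhat = uhat := by
    apply hAinj
    rw [huhat]
    exact eq_neg_of_add_eq_zero_left (hconstr mhat)
  -- first-order adjoint condition: partial-u derivative of L vanishes at the point
  have hLu0 : ∀ z : Fin n → ℝ, fderiv ℝ (uncur L) (u mbar, mbar) (z, 0) = 0 := by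
    intro z
    have h1 : fderiv ℝ (uncur L) (u mbar, mbar) (z, 0)
        = fderiv ℝ (fun y => L y mbar) (u mbar) z :=
      (aux_partial_fst (hLd (u mbar, mbar)) z).symm
    have h2 : (fun y => L y mbar) = fun y => q y mbar + auxDot v (r y mbar) := by
      funext y; rw [hL, auxDot_apply]
    have hqd : DifferentiableAt ℝ (fun y => q y mbar) (u mbar) :=
      DifferentiableAt.comp (f := fun y => (y, mbar)) (u mbar)
        (hq'.differentiable (by norm_num) (u mbar, mbar))
        (differentiableAt_id.prodMk (differentiableAt_const mbar))
    have hrd0 : DifferentiableAt ℝ (fun y => r y mbar) (u mbar) :=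
      DifferentiableAt.comp (f := fun y => (y, mbar)) (u mbar)
        (hr'.differentiable (by norm_num) (u mbar, mbar))
        (differentiableAt_id.prodMk (differentiableAt_const mbar))
    have hrd1 : HasFDerivAt (fun y => r y mbar) (fderiv ℝ (fun y => r y mbar) (u mbar))
        (u mbar) := hrd0.hasFDerivAt
    have hdd : HasFDerivAt (fun y => auxDot v (r y mbar))
        ((auxDot v).comp (fderiv ℝ (fun y => r y mbar) (u mbar))) (u mbar) :=
      ((auxDot v).hasFDerivAt).comp (u mbar) hrd1
    have h3 : fderiv ℝ (fun y => q y mbar + auxDot v (r y mbar)) (u mbar)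
        = fderiv ℝ (fun y => q y mbar) (u mbar)
          + (auxDot v).comp (fderiv ℝ (fun y => r y mbar) (u mbar)) :=
      (hqd.hasFDerivAt.add hdd).fderiv
    rw [h1, h2, h3]
    have h4 : fderiv ℝ (fun y => q y mbar) (u mbar) z = gu ⬝ᵥ z := (hgu z).symm
    have h5 : fderiv ℝ (fun y => r y mbar) (u mbar) z = A *ᵥ z := (hA z).symm
    simp only [ContinuousLinearMap.add_apply, ContinuousLinearMap.comp_apply, h4, h5,
      auxDot_apply]
    have h6 : v ⬝ᵥ (A *ᵥ z) = (Aᵀ *ᵥ v) ⬝ᵥ z := by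
      rw [dotProduct_mulVec, mulVec_transpose]
    rw [h6, hv, neg_dotProduct]
    ring
  -- second derivative blocks
  have hSymm : ∀ a b : (Fin n → ℝ) × (Fin d → ℝ),
      fderiv ℝ (fderiv ℝ (uncur L)) (u mbar, mbar) a b
        = fderiv ℝ (fderiv ℝ (uncur L)) (u mbar, mbar) b a :=
    fun a b => (hL2.contDiffAt.isSymmSndFDerivAt (by simp)) a b
  have Buu : ∀ (a c : Fin n → ℝ), a ⬝ᵥ (Luu *ᵥ c)
      = fderiv ℝ (fderiv ℝ (uncur L)) (u mbar, mbar) (a, 0) (c, 0) := by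
    intro a c
    rw [hLuu]
    have h1 : (fun x => fderiv ℝ (fun y => L y mbar) x c)
        = fun x => fderiv ℝ (uncur L) (x, mbar) ((c, 0) : (Fin n → ℝ) × (Fin d → ℝ)) := by
      funext x; exact aux_partial_fst (hLd (x, mbar)) c
    rw [h1]
    have h2 := aux_fderiv_fderiv_apply hL2 (hasFDerivAt_prodMk_left (u mbar) mbar)
      ((c, 0) : (Fin n → ℝ) × (Fin d → ℝ)) a
    simpa using h2
  have Bum : ∀ (a : Fin n → ℝ) (b : Fin d → ℝ), a ⬝ᵥ (Lum *ᵥ b)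
      = fderiv ℝ (fderiv ℝ (uncur L)) (u mbar, mbar) (0, b) (a, 0) := by
    intro a b
    rw [hLum]
    have h1 : (fun m => fderiv ℝ (fun x => L x m) (u mbar) a)
        = fun m => fderiv ℝ (uncur L) (u mbar, m) ((a, 0) : (Fin n → ℝ) × (Fin d → ℝ)) := by
      funext m; exact aux_partial_fst (hLd (u mbar, m)) a
    rw [h1]
    have h2 := aux_fderiv_fderiv_apply hL2 (hasFDerivAt_prodMk_right (u mbar) mbar)
      ((a, 0) : (Fin n → ℝ) × (Fin d → ℝ)) b
    simpa using h2
  have Bmu : ∀ (b : Fin d → ℝ) (a : Fin n → ℝ), b ⬝ᵥ (Lmu *ᵥ a)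
      = fderiv ℝ (fderiv ℝ (uncur L)) (u mbar, mbar) (a, 0) (0, b) := by
    intro b a
    rw [hLmu]
    have h1 : (fun x => fderiv ℝ (fun m => L x m) mbar b)
        = fun x => fderiv ℝ (uncur L) (x, mbar) ((0, b) : (Fin n → ℝ) × (Fin d → ℝ)) := by
      funext x; exact aux_partial_snd (hLd (x, mbar)) b
    rw [h1]
    have h2 := aux_fderiv_fderiv_apply hL2 (hasFDerivAt_prodMk_left (u mbar) mbar)
      ((0, b) : (Fin n → ℝ) × (Fin d → ℝ)) a
    simpa using h2
  have Bmm : ∀ (b b' : Fin d → ℝ), b ⬝ᵥ (Lmm *ᵥ b')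
      = fderiv ℝ (fderiv ℝ (uncur L)) (u mbar, mbar) (0, b) (0, b') := by
    intro b b'
    rw [hLmm]
    have h1 : (fun m => fderiv ℝ (fun m' => L (u mbar) m') m b')
        = fun m => fderiv ℝ (uncur L) (u mbar, m) ((0, b') : (Fin n → ℝ) × (Fin d → ℝ)) := by
      funext m; exact aux_partial_snd (hLd (u mbar, m)) b'
    rw [h1]
    have h2 := aux_fderiv_fderiv_apply hL2 (hasFDerivAt_prodMk_right (u mbar) mbar)
      ((0, b') : (Fin n → ℝ) × (Fin d → ℝ)) b
    simpa using h2
  -- Step A: replace q by L in the reduced functional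
  have hPhiPsi : (fun m => fderiv ℝ (fun m' => q (u m') m') m mhat)
      =ᶠ[nhds mbar]
        (fun m => fderiv ℝ (uncur L) (u m, m) ((fderiv ℝ u m) mhat, mhat)) := by
    filter_upwards [hu1, hstate.eventually_nhds] with m hm hst
    have e1 : (fun m' => q (u m') m') =ᶠ[nhds m] (fun m' => L (u m') m') := by
      filter_upwards [hst] with m' hm'
      rw [hL, hm', dotProduct_zero, add_zero]
    rw [e1.fderiv_eq]
    have hcomp : HasFDerivAt (fun m' => L (u m') m')
        ((fderiv ℝ (uncur L) (u m, m)).comp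
          ((fderiv ℝ u m).prod (ContinuousLinearMap.id ℝ (Fin d → ℝ)))) m :=
      HasFDerivAt.comp (f := fun m' => (u m', m')) m
        (hLd (u m, m)).hasFDerivAt (hm.hasFDerivAt.prodMk (hasFDerivAt_id m))
    rw [hcomp.fderiv]
    simp
  have step1 : fderiv ℝ (fun m => fderiv ℝ (fun m' => q (u m') m') m mhat) mbar
      = fderiv ℝ (fun m => fderiv ℝ (uncur L) (u m, m) ((fderiv ℝ u m) mhat, mhat)) mbar :=
    hPhiPsi.fderiv_eq
  -- Step B: differentiate the Lagrangian form
  have h1' : ContDiff ℝ 1 (fderiv ℝ (uncur L)) := hL2.fderiv_right (by norm_num)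
  have hc : HasFDerivAt (fun m => fderiv ℝ (uncur L) (u m, m))
      ((fderiv ℝ (fderiv ℝ (uncur L)) (u mbar, mbar)).comp
        ((fderiv ℝ u mbar).prod (ContinuousLinearMap.id ℝ (Fin d → ℝ)))) mbar :=
    HasFDerivAt.comp (f := fun m => (u m, m)) mbar
      (h1'.differentiable (by norm_num) (u mbar, mbar)).hasFDerivAt hg
  have hG : HasFDerivAt (fun m => ((fderiv ℝ u m) mhat, mhat))
      ((((fderiv ℝ u mbar).comp (0 : (Fin d → ℝ) →L[ℝ] (Fin d → ℝ))
          + (fderiv ℝ (fderiv ℝ u) mbar).flip mhat)).prod 0) mbar :=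
    (hu2.hasFDerivAt.clm_apply (hasFDerivAt_const mhat mbar)).prodMk
      (hasFDerivAt_const mhat mbar)
  have hPsi : HasFDerivAt
      (fun m => fderiv ℝ (uncur L) (u m, m) ((fderiv ℝ u m) mhat, mhat))
      ((fderiv ℝ (uncur L) (u mbar, mbar)).comp
          ((((fderiv ℝ u mbar).comp (0 : (Fin d → ℝ) →L[ℝ] (Fin d → ℝ)))
              + ((fderiv ℝ (fderiv ℝ u) mbar).flip mhat)).prod
            (0 : (Fin d → ℝ) →L[ℝ] (Fin d → ℝ)))
        + (((fderiv ℝ (fderiv ℝ (uncur L)) (u mbar, mbar)).comp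
              ((fderiv ℝ u mbar).prod (ContinuousLinearMap.id ℝ (Fin d → ℝ)))).flip
            ((fderiv ℝ u mbar) mhat, mhat)))
      mbar :=
    hc.clm_apply hG
  have step3 : fderiv ℝ
      (fun m => fderiv ℝ (uncur L) (u m, m) ((fderiv ℝ u m) mhat, mhat)) mbar w
      = fderiv ℝ (fderiv ℝ (uncur L)) (u mbar, mbar) ((fderiv ℝ u mbar) w, w)
          (uhat, mhat) := by
    rw [hPsi.fderiv]
    simp [hLu0, huderiv]
  -- Step C: expand the bilinear form
  have step4 : fderiv ℝ (fderiv ℝ (uncur L)) (u mbar, mbar) ((fderiv ℝ u mbar) w, w)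
        (uhat, mhat)
      = ((fderiv ℝ u mbar) w) ⬝ᵥ (Luu *ᵥ uhat) + ((fderiv ℝ u mbar) w) ⬝ᵥ (Lum *ᵥ mhat)
        + (w ⬝ᵥ (Lmu *ᵥ uhat) + w ⬝ᵥ (Lmm *ᵥ mhat)) := by
    have hs1 : ((fderiv ℝ u mbar) w, w)
        = (((fderiv ℝ u mbar) w, 0) : (Fin n → ℝ) × (Fin d → ℝ)) + (0, w) := by simp
    have hs2 : ((uhat, mhat) : (Fin n → ℝ) × (Fin d → ℝ))
        = ((uhat, 0) : (Fin n → ℝ) × (Fin d → ℝ)) + (0, mhat) := by simp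
    rw [hs1, hs2]
    simp only [map_add, ContinuousLinearMap.add_apply]
    rw [← Buu ((fderiv ℝ u mbar) w) uhat, ← Bmm w mhat]
    rw [hSymm (((0 : Fin n → ℝ), w) : (Fin n → ℝ) × (Fin d → ℝ)) (uhat, 0),
      ← Bmu w uhat]
    rw [hSymm (((fderiv ℝ u mbar) w, 0) : (Fin n → ℝ) × (Fin d → ℝ)) (0, mhat),
      ← Bum ((fderiv ℝ u mbar) w) mhat]
    ring
  -- combine
  have hcombine : ((fderiv ℝ u mbar) w) ⬝ᵥ (Luu *ᵥ uhat)
        + ((fderiv ℝ u mbar) w) ⬝ᵥ (Lum *ᵥ mhat)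
      = w ⬝ᵥ (Bᵀ *ᵥ vhat) := by
    rw [← dotProduct_add]
    have e1 : Luu *ᵥ uhat + Lum *ᵥ mhat = -(Aᵀ *ᵥ vhat) := by rw [hvhat, neg_neg]
    have e2 : A *ᵥ ((fderiv ℝ u mbar) w) = -(B *ᵥ w) :=
      eq_neg_of_add_eq_zero_left (hconstr w)
    rw [e1]
    calc ((fderiv ℝ u mbar) w) ⬝ᵥ -(Aᵀ *ᵥ vhat)
        = -((((fderiv ℝ u mbar) w) ᵥ* Aᵀ) ⬝ᵥ vhat) := by
          rw [dotProduct_neg, dotProduct_mulVec]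
      _ = -((A *ᵥ ((fderiv ℝ u mbar) w)) ⬝ᵥ vhat) := by rw [vecMul_transpose]
      _ = (B *ᵥ w) ⬝ᵥ vhat := by rw [e2, neg_dotProduct, neg_neg]
      _ = (w ᵥ* Bᵀ) ⬝ᵥ vhat := by rw [vecMul_transpose]
      _ = w ⬝ᵥ (Bᵀ *ᵥ vhat) := by rw [dotProduct_mulVec]
  have hRHS : (Bᵀ *ᵥ vhat + Lmu *ᵥ uhat + Lmm *ᵥ mhat) ⬝ᵥ w
      = w ⬝ᵥ (Bᵀ *ᵥ vhat) + (w ⬝ᵥ (Lmu *ᵥ uhat) + w ⬝ᵥ (Lmm *ᵥ mhat)) := by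
    rw [add_dotProduct, add_dotProduct, dotProduct_comm (Bᵀ *ᵥ vhat) w,
      dotProduct_comm (Lmu *ᵥ uhat) w, dotProduct_comm (Lmm *ᵥ mhat) w]
    ring
  rw [step1, step3, step4, hcombine, hRHS]
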